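/- Fix real parameters μ₁, μ₂, μ₃, μ₄ and define smooth vector fields on ℝ⁵ (coordinates x₀,x₁,x₂,x₃,x₄) by η̃₀ = (1,0,0,0,0), η̃₁ = (0,1,0,0,0), η̃₂(x) = (−μ₁x₁, 0, 1, 0, 0), η̃₃(x) = ((μ₁/2)(x₁² − x₂²) − μ₃x₁ − μ₄x₂, x₂, −x₁, 1, 0), η̃₄(x) = (−μ₂x₃, 0, 0, 0, 1). Then, with respect to the Lie bracket of vector fields, these satisfy the (opposite) commutation relations of the central extension of e(2) ⊕ ℝ: [η̃₁,η̃₂] = −μ₁η̃₀, [η̃₁,η̃₃] = −η̃₂ − μ₃η̃₀, [η̃₂,η̃₃] = η̃₁ − μ₄η̃₀, [η̃₃,η̃₄] = −μ₂η̃₀, [η̃₁,η̃₄] = [η̃₂,η̃₄] = 0, and [η̃₀, η̃ₐ] = 0 for all a. -/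
import Mathlib


noncomputable section

/-- The Lie bracket of vector fields on `ℝ⁵`:
`[X,Y](p) = (DY)(p)·X(p) − (DX)(p)·Y(p)`. -/
def lieVF (X Y : (Fin 5 → ℝ) → (Fin 5 → ℝ)) : (Fin 5 → ℝ) → (Fin 5 → ℝ) :=
  fun p => fderiv ℝ Y p (X p) - fderiv ℝ X p (Y p)

/-- The right-invariant vector fields `η̃₀, η̃₁, η̃₂, η̃₃, η̃₄` of the central extension
of `E(2) × ℝ` on `ℝ⁵` (coordinates `x₀,…,x₄`). -/
def ηt (μ₁ μ₂ μ₃ μ₄ : ℝ) : Fin 5 → ((Fin 5 → ℝ) → (Fin 5 → ℝ)) :=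
  ![fun _ => ![1, 0, 0, 0, 0],
    fun _ => ![0, 1, 0, 0, 0],
    fun x => ![-(μ₁ * x 1), 0, 1, 0, 0],
    fun x => ![μ₁ / 2 * ((x 1) ^ 2 - (x 2) ^ 2) - μ₃ * x 1 - μ₄ * x 2, x 2, -x 1, 1, 0],
    fun x => ![-(μ₂ * x 3), 0, 0, 0, 1]]

def Pj (i : Fin 5) : (Fin 5 → ℝ) →L[ℝ] ℝ := ContinuousLinearMap.proj i

lemma Pj_hasFDerivAt (i : Fin 5) (p : Fin 5 → ℝ) :
    HasFDerivAt (fun x : Fin 5 → ℝ => x i) (Pj i) p := (Pj i).hasFDerivAt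

lemma hfd2 (μ₁ μ₂ μ₃ μ₄ : ℝ) (p : Fin 5 → ℝ) :
    HasFDerivAt (ηt μ₁ μ₂ μ₃ μ₄ 2)
      (ContinuousLinearMap.pi ![-(μ₁ • Pj 1), 0, 0, 0, 0]) p := by
  apply hasFDerivAt_pi''
  intro i
  fin_cases i <;>
    simp only [ηt, Matrix.cons_val_two, Matrix.tail_cons, Matrix.head_cons,
      ContinuousLinearMap.proj_pi, Matrix.cons_val_zero, Matrix.cons_val_one,
      Matrix.cons_val_fin_one, Matrix.cons_val', Matrix.cons_val_succ]
  · exact (((Pj_hasFDerivAt 1 p).const_mul μ₁).neg).congr_fderiv (by ext v; simp [Pj])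
  all_goals exact (hasFDerivAt_const _ _).congr_fderiv (by ext v; simp)

lemma hfd4 (μ₁ μ₂ μ₃ μ₄ : ℝ) (p : Fin 5 → ℝ) :
    HasFDerivAt (ηt μ₁ μ₂ μ₃ μ₄ 4)
      (ContinuousLinearMap.pi ![-(μ₂ • Pj 3), 0, 0, 0, 0]) p := by
  apply hasFDerivAt_pi''
  intro i
  fin_cases i <;>
    simp only [ηt, Matrix.cons_val_four, Matrix.tail_cons, Matrix.head_cons,
      ContinuousLinearMap.proj_pi, Matrix.cons_val_zero, Matrix.cons_val_one,
      Matrix.cons_val_fin_one, Matrix.cons_val', Matrix.cons_val_succ]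
  · exact (((Pj_hasFDerivAt 3 p).const_mul μ₂).neg).congr_fderiv (by ext v; simp [Pj])
  all_goals exact (hasFDerivAt_const _ _).congr_fderiv (by ext v; simp)

lemma hfd3 (μ₁ μ₂ μ₃ μ₄ : ℝ) (p : Fin 5 → ℝ) :
    HasFDerivAt (ηt μ₁ μ₂ μ₃ μ₄ 3)
      (ContinuousLinearMap.pi
        ![(μ₁ * p 1 - μ₃) • Pj 1 + (-(μ₁ * p 2) - μ₄) • Pj 2, Pj 2, -Pj 1, 0, 0]) p := by
  apply hasFDerivAt_pi''
  intro i
  fin_cases i <;>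
    simp only [ηt, Matrix.cons_val_three, Matrix.tail_cons, Matrix.head_cons,
      ContinuousLinearMap.proj_pi, Matrix.cons_val_zero, Matrix.cons_val_one,
      Matrix.cons_val_fin_one, Matrix.cons_val', Matrix.cons_val_succ]
  · simp only [pow_two]
    refine HasFDerivAt.congr_fderiv
      (((((Pj_hasFDerivAt 1 p).mul (Pj_hasFDerivAt 1 p)).sub
          ((Pj_hasFDerivAt 2 p).mul (Pj_hasFDerivAt 2 p))).const_mul (μ₁/2)).sub
        ((Pj_hasFDerivAt 1 p).const_mul μ₃) |>.sub ((Pj_hasFDerivAt 2 p).const_mul μ₄)) ?_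
    ext v; simp [Pj]; ring
  · exact (Pj_hasFDerivAt 2 p).congr_fderiv rfl
  · exact ((Pj_hasFDerivAt 1 p).neg).congr_fderiv rfl
  all_goals exact (hasFDerivAt_const _ _).congr_fderiv (by ext v; simp)


lemma hfd0 (μ₁ μ₂ μ₃ μ₄ : ℝ) (p : Fin 5 → ℝ) :
    fderiv ℝ (ηt μ₁ μ₂ μ₃ μ₄ 0) p = 0 := by
  have : ηt μ₁ μ₂ μ₃ μ₄ 0 = fun _ => ![1, 0, 0, 0, 0] := rfl
  rw [this]; exact fderiv_const_apply _

lemma hfd1 (μ₁ μ₂ μ₃ μ₄ : ℝ) (p : Fin 5 → ℝ) :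
    fderiv ℝ (ηt μ₁ μ₂ μ₃ μ₄ 1) p = 0 := by
  have : ηt μ₁ μ₂ μ₃ μ₄ 1 = fun _ => ![0, 1, 0, 0, 0] := rfl
  rw [this]; exact fderiv_const_apply _


/-- the fields `η̃ₐ` satisfy the (opposite) commutation relations of
the one-dimensional central extension of `e(2) ⊕ ℝ` by the 2-cocycle with
parameters `μ₁, μ₂, μ₃, μ₄`. -/
theorem extended_eta_fields_commutation_relations (μ₁ μ₂ μ₃ μ₄ : ℝ) :
    lieVF (ηt μ₁ μ₂ μ₃ μ₄ 1) (ηt μ₁ μ₂ μ₃ μ₄ 2) = -μ₁ • ηt μ₁ μ₂ μ₃ μ₄ 0 ∧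
    lieVF (ηt μ₁ μ₂ μ₃ μ₄ 1) (ηt μ₁ μ₂ μ₃ μ₄ 3)
      = -ηt μ₁ μ₂ μ₃ μ₄ 2 - μ₃ • ηt μ₁ μ₂ μ₃ μ₄ 0 ∧
    lieVF (ηt μ₁ μ₂ μ₃ μ₄ 2) (ηt μ₁ μ₂ μ₃ μ₄ 3)
      = ηt μ₁ μ₂ μ₃ μ₄ 1 - μ₄ • ηt μ₁ μ₂ μ₃ μ₄ 0 ∧
    lieVF (ηt μ₁ μ₂ μ₃ μ₄ 3) (ηt μ₁ μ₂ μ₃ μ₄ 4) = -μ₂ • ηt μ₁ μ₂ μ₃ μ₄ 0 ∧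
    lieVF (ηt μ₁ μ₂ μ₃ μ₄ 1) (ηt μ₁ μ₂ μ₃ μ₄ 4) = 0 ∧
    lieVF (ηt μ₁ μ₂ μ₃ μ₄ 2) (ηt μ₁ μ₂ μ₃ μ₄ 4) = 0 ∧
    (∀ a : Fin 5, lieVF (ηt μ₁ μ₂ μ₃ μ₄ 0) (ηt μ₁ μ₂ μ₃ μ₄ a) = 0) := by
  have h2 := fun p => (hfd2 μ₁ μ₂ μ₃ μ₄ p).fderiv
  have h3 := fun p => (hfd3 μ₁ μ₂ μ₃ μ₄ p).fderiv
  have h4 := fun p => (hfd4 μ₁ μ₂ μ₃ μ₄ p).fderiv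
  refine ⟨?_, ?_, ?_, ?_, ?_, ?_, ?_⟩
  case _ =>
    funext p; ext i
    simp only [lieVF, h2, hfd1, ContinuousLinearMap.zero_apply]
    fin_cases i <;>
      simp [ηt, Pj, ContinuousLinearMap.pi_apply, Matrix.cons_val_zero, Matrix.cons_val_one]
  case _ =>
    funext p; ext i
    simp only [lieVF, h3, hfd1, ContinuousLinearMap.zero_apply]
    fin_cases i <;>
      simp [ηt, Pj, ContinuousLinearMap.pi_apply] <;> ring
  case _ =>
    funext p; ext i
    simp only [lieVF, h3, h2]
    fin_cases i <;>
      simp [ηt, Pj, ContinuousLinearMap.pi_apply] <;> ring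
  case _ =>
    funext p; ext i
    simp only [lieVF, h3, h4]
    fin_cases i <;>
      simp [ηt, Pj, ContinuousLinearMap.pi_apply] <;> ring
  case _ =>
    funext p; ext i
    simp only [lieVF, h4, hfd1, ContinuousLinearMap.zero_apply]
    fin_cases i <;> simp [ηt, Pj, ContinuousLinearMap.pi_apply]
  case _ =>
    funext p; ext i
    simp only [lieVF, h2, h4]
    fin_cases i <;> simp [ηt, Pj, ContinuousLinearMap.pi_apply]
  case _ =>
    intro a
    have g0 : lieVF (ηt μ₁ μ₂ μ₃ μ₄ 0) (ηt μ₁ μ₂ μ₃ μ₄ 0) = 0 := by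
      funext p; ext i
      simp [lieVF, hfd0]
    have g1 : lieVF (ηt μ₁ μ₂ μ₃ μ₄ 0) (ηt μ₁ μ₂ μ₃ μ₄ 1) = 0 := by
      funext p; ext i
      simp [lieVF, hfd0, hfd1]
    have g2 : lieVF (ηt μ₁ μ₂ μ₃ μ₄ 0) (ηt μ₁ μ₂ μ₃ μ₄ 2) = 0 := by
      funext p; ext i
      simp only [lieVF, hfd0, h2, ContinuousLinearMap.zero_apply]
      fin_cases i <;> simp [ηt, Pj, ContinuousLinearMap.pi_apply]
    have g3 : lieVF (ηt μ₁ μ₂ μ₃ μ₄ 0) (ηt μ₁ μ₂ μ₃ μ₄ 3) = 0 := by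
      funext p; ext i
      simp only [lieVF, hfd0, h3, ContinuousLinearMap.zero_apply]
      fin_cases i <;> simp [ηt, Pj, ContinuousLinearMap.pi_apply]
    have g4 : lieVF (ηt μ₁ μ₂ μ₃ μ₄ 0) (ηt μ₁ μ₂ μ₃ μ₄ 4) = 0 := by
      funext p; ext i
      simp only [lieVF, hfd0, h4, ContinuousLinearMap.zero_apply]
      fin_cases i <;> simp [ηt, Pj, ContinuousLinearMap.pi_apply]
    fin_cases a
    exacts [g0, g1, g2, g3, g4]
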